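/- Let a group G act on a nonempty set X. Then the action is amenable, i.e. there exists a positive linear functional μ on the space ℓ∞(X) of bounded real-valued functions on X with μ(1) = 1 and μ(f ∘ (x ↦ g·x)) = μ(f) for all f ∈ ℓ∞(X) and g ∈ G, if and only if for every θ > 1 and every finite subset E ⊆ G there exists a finite nonempty subset F ⊆ X such that |{g·x | g ∈ E, x ∈ F}| ≤ θ·|F|. -/

import Mathlib

open Pointwise Filter Topology


/-- The space `ℓ∞(X)` of bounded real-valued functions on a set `X`, as a submodule
of `X → ℝ`. -/
def BddFns (X : Type*) : Submodule ℝ (X → ℝ) where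
  carrier := {f : X → ℝ | ∃ C : ℝ, ∀ x : X, |f x| ≤ C}
  add_mem' := by
    rintro f g ⟨C, hC⟩ ⟨D, hD⟩
    exact ⟨C + D, fun x => (abs_add_le _ _).trans (add_le_add (hC x) (hD x))⟩
  zero_mem' := ⟨0, fun x => by simp⟩
  smul_mem' := by
    rintro c f ⟨C, hC⟩
    refine ⟨|c| * C, fun x => ?_⟩
    rw [Pi.smul_apply, smul_eq_mul, abs_mul]
    exact mul_le_mul_of_nonneg_left (hC x) (abs_nonneg c)

set_option maxHeartbeats 2000000

/-- Rosenblatt. An action of a group `G` on a nonempty set `X` is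
amenable (i.e. `ℓ∞(X)` admits a `G`-invariant mean) if and only if it satisfies the
Følner-type condition. -/
theorem stmt_3 {G X : Type*} [Group G] [MulAction G X] [Nonempty X] :
    (∃ μ : ↥(BddFns X) →ₗ[ℝ] ℝ,
        (∀ f : ↥(BddFns X), (∀ x : X, 0 ≤ (f : X → ℝ) x) → 0 ≤ μ f) ∧
        (∀ f : ↥(BddFns X), (∀ x : X, (f : X → ℝ) x = 1) → μ f = 1) ∧
        (∀ (g : G) (f f' : ↥(BddFns X)),
          (∀ x : X, (f' : X → ℝ) x = (f : X → ℝ) (g • x)) → μ f' = μ f)) ↔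
      (∀ θ : ℝ, 1 < θ → ∀ E : Finset G, ∃ F : Finset X, F.Nonempty ∧
        ({z : X | ∃ g ∈ E, ∃ x ∈ F, g • x = z}.ncard : ℝ) ≤ θ * (F.card : ℝ)) := by
  classical
  constructor
  · rintro ⟨μ, hpos, hone, hinv⟩ θ hθ E
    by_contra hcon
    push_neg at hcon
    -- translate to pointwise smul of finsets
    have key : ∀ F : Finset X, F.Nonempty → θ * F.card < ((E • F).card : ℝ) := by
      intro F hF
      have hset : {z : X | ∃ g ∈ E, ∃ x ∈ F, g • x = z} = ↑(E • F) := by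
        ext z; simp [Finset.mem_smul, Set.mem_smul]
      have := hcon F hF
      rwa [hset, Set.ncard_coe_finset] at this
    have hθ0 : (0:ℝ) < θ := lt_trans one_pos hθ
    -- iterate
    have hiter : ∀ n : ℕ, ∀ F : Finset X, F.Nonempty →
        θ ^ n * F.card ≤ ((E ^ n • F).card : ℝ) ∧ (E ^ n • F).Nonempty := by
      intro n
      induction n with
      | zero => intro F hF; simp [hF]
      | succ n ih =>
        intro F hF
        obtain ⟨h1, h2⟩ := ih F hF
        have hkey := key _ h2
        have heq : E ^ (n+1) • F = E • (E ^ n • F) := by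
          rw [pow_succ', mul_smul]
        constructor
        · rw [heq, pow_succ']
          calc θ * θ ^ n * F.card = θ * (θ ^ n * F.card) := by ring
          _ ≤ θ * ((E ^ n • F).card : ℝ) := by nlinarith
          _ ≤ ((E • (E ^ n • F)).card : ℝ) := (key _ h2).le
        · rw [heq]
          rw [← Finset.card_pos]
          have : (0:ℝ) < ((E • (E ^ n • F)).card : ℝ) := by
            have : (0:ℝ) < θ * (E ^ n • F).card := by
              have := Finset.card_pos.2 h2
              positivity
            linarith [key _ h2]
          exact_mod_cast this
    obtain ⟨n, hn⟩ := pow_unbounded_of_one_lt (2:ℝ) hθ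
    set E' : Finset G := E ^ n with hE'def
    have hE' : ∀ F : Finset X, F.Nonempty → 2 * F.card ≤ (E' • F).card := by
      intro F hF
      obtain ⟨h1, _⟩ := hiter n F hF
      have : (2:ℝ) * F.card ≤ ((E' • F).card : ℝ) := by
        calc (2:ℝ) * F.card ≤ θ ^ n * F.card := by
              have : (0:ℝ) ≤ (F.card : ℝ) := Nat.cast_nonneg _
              nlinarith
        _ ≤ _ := h1
      exact_mod_cast this
    -- Hall
    set t : X ⊕ X → Finset X := fun z => E'.image (· • Sum.elim id id z) with htdef
    have hall : ∀ s : Finset (X ⊕ X), s.card ≤ (s.biUnion t).card := by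
      intro s
      rcases s.eq_empty_or_nonempty with rfl | hs
      · simp
      set F : Finset X := s.image (Sum.elim id id) with hFdef
      have hFne : F.Nonempty := hs.image _
      have hsub : E' • F ⊆ s.biUnion t := by
        intro a ha
        rw [Finset.mem_smul] at ha
        obtain ⟨g, hg, x, hx, hgx⟩ := ha
        rw [hFdef, Finset.mem_image] at hx
        obtain ⟨z, hz, hzx⟩ := hx
        refine Finset.mem_biUnion.2 ⟨z, hz, ?_⟩
        rw [htdef]
        exact Finset.mem_image.2 ⟨g, hg, by rw [hzx, hgx]⟩
      have h2 : s.card ≤ 2 * F.card := by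
        have : s ⊆ (F.image Sum.inl) ∪ (F.image Sum.inr) := by
          intro z hz
          rcases z with x | x
          · exact Finset.mem_union_left _ (Finset.mem_image.2
              ⟨x, Finset.mem_image.2 ⟨Sum.inl x, hz, rfl⟩, rfl⟩)
          · exact Finset.mem_union_right _ (Finset.mem_image.2
              ⟨x, Finset.mem_image.2 ⟨Sum.inr x, hz, rfl⟩, rfl⟩)
        calc s.card ≤ ((F.image Sum.inl) ∪ (F.image Sum.inr)).card := Finset.card_le_card this
        _ ≤ (F.image Sum.inl).card + (F.image Sum.inr).card := Finset.card_union_le _ _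
        _ ≤ F.card + F.card := add_le_add (Finset.card_image_le) (Finset.card_image_le)
        _ = 2 * F.card := (two_mul _).symm
      exact h2.trans ((hE' F hFne).trans (Finset.card_le_card hsub))
    obtain ⟨f, finj, hf⟩ := (Finset.all_card_le_biUnion_card_iff_exists_injective t).1 hall
    have h1 : ∀ x : X, ∃ g, g ∈ E' ∧ g • x = f (Sum.inl x) := by
      intro x
      have := hf (Sum.inl x)
      rw [htdef, Finset.mem_image] at this
      simpa using this
    have h2 : ∀ x : X, ∃ g, g ∈ E' ∧ g • x = f (Sum.inr x) := by
      intro x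
      have := hf (Sum.inr x)
      rw [htdef, Finset.mem_image] at this
      simpa using this
    choose g1 hg1mem hg1 using h1
    choose g2 hg2mem hg2 using h2
    -- indicator functions
    set ind : Set X → ↥(BddFns X) := fun A =>
      ⟨fun x => if x ∈ A then (1:ℝ) else 0, ⟨1, fun x => by by_cases h : x ∈ A <;> simp [h]⟩⟩ with hinddef
    have ind_apply : ∀ (A : Set X) (x : X), ((ind A : X → ℝ)) x = if x ∈ A then 1 else 0 :=
      fun A x => rfl
    have hsum_eval : ∀ (s : Finset G) (v : G → ↥(BddFns X)) (x : X),
        ((∑ g ∈ s, v g : ↥(BddFns X)) : X → ℝ) x = ∑ g ∈ s, (v g : X → ℝ) x := by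
      intro s v x
      simp [AddSubmonoidClass.coe_finset_sum, Finset.sum_apply]
    have oneF : ↥(BddFns X) := ⟨fun _ => 1, ⟨1, by norm_num⟩⟩
    have hmono : ∀ u v : ↥(BddFns X), (∀ x, (u:X→ℝ) x ≤ (v:X→ℝ) x) → μ u ≤ μ v := by
      intro u v h
      have h0 : 0 ≤ μ (v - u) := hpos _ (fun x => by
        have he : ((v - u : ↥(BddFns X)) : X → ℝ) x = (v:X→ℝ) x - (u:X→ℝ) x := rfl
        rw [he]; linarith [h x])
      rw [map_sub] at h0; linarith
    have hindinv : ∀ (g : G) (A : Set X), μ (ind A) = μ (ind (g • A)) := by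
      intro g A
      refine hinv g (ind (g • A)) (ind A) (fun x => ?_)
      simp only [ind_apply, Set.smul_mem_smul_set_iff]
    set A : G → Set X := fun g => {x | g1 x = g} with hA
    set B : G → Set X := fun g => {x | g2 x = g} with hB
    have hSA : ∑ g ∈ E', μ (ind (A g)) = 1 := by
      rw [← map_sum]
      refine hone _ (fun x => ?_)
      rw [hsum_eval]
      have he : ∀ g ∈ E', ((ind (A g) : X → ℝ)) x = if g1 x = g then 1 else 0 :=
        fun g _ => rfl
      rw [Finset.sum_congr rfl he, Finset.sum_ite_eq]
      simp [hg1mem x]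
    have hSB : ∑ g ∈ E', μ (ind (B g)) = 1 := by
      rw [← map_sum]
      refine hone _ (fun x => ?_)
      rw [hsum_eval]
      have he : ∀ g ∈ E', ((ind (B g) : X → ℝ)) x = if g2 x = g then 1 else 0 :=
        fun g _ => rfl
      rw [Finset.sum_congr rfl he, Finset.sum_ite_eq]
      simp [hg2mem x]
    -- pointwise bound
    have hbound : ∀ z : X,
        (∑ g ∈ E', (((ind (g • A g) + ind (g • B g) : ↥(BddFns X)) : X → ℝ)) z) ≤ 1 := by
      intro z
      have he : ∀ g ∈ E', (((ind (g • A g) + ind (g • B g) : ↥(BddFns X)) : X → ℝ)) z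
          = (if z ∈ g • A g then (1:ℝ) else 0) + (if z ∈ g • B g then (1:ℝ) else 0) :=
        fun g _ => rfl
      rw [Finset.sum_congr rfl he, Finset.sum_add_distrib, Finset.sum_boole, Finset.sum_boole]
      set s1 := E'.filter (fun g => z ∈ g • A g) with hs1
      set s2 := E'.filter (fun g => z ∈ g • B g) with hs2
      have key1 : ∀ g ∈ s1, f (Sum.inl (g⁻¹ • z)) = z ∧ g1 (g⁻¹ • z) = g := by
        intro g hg
        obtain ⟨-, hz⟩ := Finset.mem_filter.1 hg
        obtain ⟨x, hxA, hgx⟩ := hz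
        have hx : x = g⁻¹ • z := by rw [← hgx, inv_smul_smul]
        have hg1x : g1 x = g := hxA
        refine ⟨?_, by rw [← hx]; exact hg1x⟩
        rw [← hx, ← hg1 x, hg1x]; exact hgx
      have key2 : ∀ g ∈ s2, f (Sum.inr (g⁻¹ • z)) = z ∧ g2 (g⁻¹ • z) = g := by
        intro g hg
        obtain ⟨-, hz⟩ := Finset.mem_filter.1 hg
        obtain ⟨x, hxB, hgx⟩ := hz
        have hx : x = g⁻¹ • z := by rw [← hgx, inv_smul_smul]
        have hg2x : g2 x = g := hxB
        refine ⟨?_, by rw [← hx]; exact hg2x⟩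
        rw [← hx, ← hg2 x, hg2x]; exact hgx
      have hc1 : s1.card ≤ 1 := by
        refine Finset.card_le_one.2 (fun g hg g' hg' => ?_)
        obtain ⟨hf1, he1⟩ := key1 g hg
        obtain ⟨hf1', he1'⟩ := key1 g' hg'
        have := finj (hf1.trans hf1'.symm)
        have hxx : g⁻¹ • z = g'⁻¹ • z := by simpa using this
        rw [← he1, hxx, he1']
      have hc2 : s2.card ≤ 1 := by
        refine Finset.card_le_one.2 (fun g hg g' hg' => ?_)
        obtain ⟨hf2, he2⟩ := key2 g hg
        obtain ⟨hf2', he2'⟩ := key2 g' hg'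
        have := finj (hf2.trans hf2'.symm)
        have hxx : g⁻¹ • z = g'⁻¹ • z := by simpa using this
        rw [← he2, hxx, he2']
      have hmix : ¬(s1.Nonempty ∧ s2.Nonempty) := by
        rintro ⟨⟨g, hg⟩, ⟨g', hg'⟩⟩
        have h1' := (key1 g hg).1
        have h2' := (key2 g' hg').1
        exact absurd (finj (h1'.trans h2'.symm)) (by simp)
      have : s1.card + s2.card ≤ 1 := by
        rcases s1.eq_empty_or_nonempty with h | h
        · simpa [h] using hc2
        · rcases s2.eq_empty_or_nonempty with h' | h'
          · simpa [h'] using hc1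
          · exact absurd ⟨h, h'⟩ hmix
      exact_mod_cast this
    -- conclude
    have hfin : μ (∑ g ∈ E', (ind (g • A g) + ind (g • B g))) ≤ 1 := by
      have h1le := hmono (∑ g ∈ E', (ind (g • A g) + ind (g • B g)))
        ⟨fun _ => 1, ⟨1, by norm_num⟩⟩
        (fun z => le_trans (le_of_eq (hsum_eval _ _ z)) (hbound z))
      calc μ _ ≤ μ ⟨fun _ => 1, ⟨1, by norm_num⟩⟩ := h1le
      _ = 1 := hone _ (fun _ => rfl)
    have hexp : μ (∑ g ∈ E', (ind (g • A g) + ind (g • B g)))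
        = ∑ g ∈ E', μ (ind (g • A g)) + ∑ g ∈ E', μ (ind (g • B g)) := by
      rw [map_sum]
      simp only [map_add]
      rw [Finset.sum_add_distrib]
    have hA1 : ∑ g ∈ E', μ (ind (g • A g)) = 1 := by
      rw [← hSA]
      exact Finset.sum_congr rfl (fun g _ => (hindinv g (A g)).symm)
    have hB1 : ∑ g ∈ E', μ (ind (g • B g)) = 1 := by
      rw [← hSB]
      exact Finset.sum_congr rfl (fun g _ => (hindinv g (B g)).symm)
    rw [hexp, hA1, hB1] at hfin
    linarith

  · intro hFol
    -- choose Følner sets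
    have hex : ∀ i : ℕ × Finset G, ∃ F : Finset X, F.Nonempty ∧
        ({z : X | ∃ g ∈ insert (1:G) i.2, ∃ x ∈ F, g • x = z}.ncard : ℝ)
          ≤ (1 + 1/(i.1+1)) * F.card := by
      intro i
      refine hFol _ ?_ _
      have : (0:ℝ) < 1/(i.1+1) := by positivity
      linarith
    choose F hFne hFcard using hex
    set U : Ultrafilter (ℕ × Finset G) := Ultrafilter.of atTop with hU
    set m : (ℕ × Finset G) → ↥(BddFns X) → ℝ :=
      fun i f => (∑ x ∈ F i, (f : X → ℝ) x) / (F i).card with hm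
    -- limits exist
    have hm_lim : ∀ f : ↥(BddFns X), ∃ a : ℝ, Tendsto (fun i => m i f) ↑U (𝓝 a) := by
      intro f
      obtain ⟨C, hC⟩ := f.2
      have hmem : ∀ i, m i f ∈ Set.Icc (-C) C := by
        intro i
        have hcard : (0:ℝ) < (F i).card := by
          exact_mod_cast Finset.card_pos.2 (hFne i)
        constructor
        · rw [le_div_iff₀ hcard]
          calc -C * (F i).card = ∑ _x ∈ F i, (-C) := by
                rw [Finset.sum_const, nsmul_eq_mul, mul_comm]
          _ ≤ ∑ x ∈ F i, (f : X → ℝ) x :=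
                Finset.sum_le_sum (fun x _ => neg_le_of_abs_le (hC x))
        · rw [div_le_iff₀ hcard]
          calc ∑ x ∈ F i, (f : X → ℝ) x ≤ ∑ _x ∈ F i, C :=
                Finset.sum_le_sum (fun x _ => le_of_abs_le (hC x))
          _ = C * (F i).card := by rw [Finset.sum_const, nsmul_eq_mul, mul_comm]
      have hle : ↑(U.map (fun i => m i f)) ≤ Filter.principal (Set.Icc (-C) C) := by
        rw [Ultrafilter.coe_map]
        exact Filter.le_principal_iff.2 (Filter.mem_map.2 (Filter.univ_mem' hmem))
      obtain ⟨a, _, ha⟩ := isCompact_Icc.ultrafilter_le_nhds (U.map (fun i => m i f)) hle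
      exact ⟨a, by rwa [Ultrafilter.coe_map] at ha⟩
    choose μ₀ hμ₀ using hm_lim
    -- m is linear
    have hm_add : ∀ i (f f' : ↥(BddFns X)), m i (f + f') = m i f + m i f' := by
      intro i f f'
      rw [hm]
      simp only [Submodule.coe_add, Pi.add_apply]
      rw [Finset.sum_add_distrib, add_div]
    have hm_smul : ∀ i (c : ℝ) (f : ↥(BddFns X)), m i (c • f) = c * m i f := by
      intro i c f
      rw [hm]
      simp only [SetLike.val_smul, Pi.smul_apply, smul_eq_mul]
      rw [← Finset.mul_sum, mul_div_assoc]
    have hadd : ∀ f f', μ₀ (f + f') = μ₀ f + μ₀ f' := by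
      intro f f'
      refine tendsto_nhds_unique (hμ₀ (f + f')) ?_
      have := (hμ₀ f).add (hμ₀ f')
      simpa [hm_add] using this
    have hsmul : ∀ (c : ℝ) f, μ₀ (c • f) = c * μ₀ f := by
      intro c f
      refine tendsto_nhds_unique (hμ₀ (c • f)) ?_
      have := (hμ₀ f).const_mul c
      simpa [hm_smul] using this
    set μ : ↥(BddFns X) →ₗ[ℝ] ℝ :=
      { toFun := μ₀, map_add' := hadd, map_smul' := hsmul } with hμdef
    refine ⟨μ, ?_, ?_, ?_⟩
    · -- positivity
      intro f hf
      refine ge_of_tendsto' (hμ₀ f) (fun i => ?_)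
      have hcard : (0:ℝ) ≤ (F i).card := Nat.cast_nonneg _
      exact div_nonneg (Finset.sum_nonneg (fun x _ => hf x)) hcard
    · -- normalization
      intro f hf
      refine tendsto_nhds_unique (hμ₀ f) ?_
      have : (fun i => m i f) = fun _ => 1 := by
        funext i
        rw [hm]
        simp only [hf]
        rw [Finset.sum_const, nsmul_eq_mul, mul_one, div_self]
        exact_mod_cast (Finset.card_pos.2 (hFne i)).ne'
      rw [this]
      exact tendsto_const_nhds
    · -- invariance
      intro g f f' hff'
      obtain ⟨C₀, hC₀⟩ := f.2
      have hC0 : 0 ≤ C₀ := le_trans (abs_nonneg _) (hC₀ (Classical.arbitrary X))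
      -- the key finite estimate
      have hest : ∀ i : ℕ × Finset G, g ∈ i.2 → |m i f' - m i f| ≤ 2 * C₀ / (i.1 + 1) := by
        intro i hg
        set Fi := F i with hFi
        have hcard0 : (0:ℝ) < (Fi.card : ℝ) := by
          exact_mod_cast Finset.card_pos.2 (hFne i)
        have hn1 : (0:ℝ) < (i.1:ℝ) + 1 := by positivity
        set gF : Finset X := Fi.image (g • ·) with hgF
        have hgFcard : gF.card = Fi.card :=
          Finset.card_image_of_injective _ (MulAction.injective g)
        have hZfin : {z : X | ∃ a ∈ insert (1:G) i.2, ∃ x ∈ Fi, a • x = z}.Finite := by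
          apply Set.Finite.subset
            ((((insert (1:G) i.2) ×ˢ Fi).finite_toSet).image (fun p => p.1 • p.2))
          rintro z ⟨a, ha, x, hx, rfl⟩
          exact ⟨(a, x), by simpa using ⟨Finset.mem_insert.1 ha, hx⟩, rfl⟩
        have hsub : ↑(Fi ∪ gF) ⊆ {z : X | ∃ a ∈ insert (1:G) i.2, ∃ x ∈ Fi, a • x = z} := by
          intro z hz
          rcases Finset.mem_union.1 hz with h | h
          · exact ⟨1, Finset.mem_insert_self _ _, z, h, one_smul _ _⟩
          · obtain ⟨x, hx, rfl⟩ := Finset.mem_image.1 h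
            exact ⟨g, Finset.mem_insert_of_mem hg, x, hx, rfl⟩
        have hUcard : ((Fi ∪ gF).card : ℝ) ≤ (1 + 1/((i.1:ℝ)+1)) * Fi.card := by
          refine le_trans ?_ (hFcard i)
          have h := Set.ncard_le_ncard hsub hZfin
          rw [Set.ncard_coe_finset] at h
          exact_mod_cast h
        have hd1 : ((gF \ Fi).card : ℝ) ≤ (Fi.card : ℝ) / ((i.1:ℝ)+1) := by
          have h := Finset.card_sdiff_add_card gF Fi
          rw [Finset.union_comm] at h
          have h' : ((gF \ Fi).card : ℝ) + Fi.card = ((Fi ∪ gF).card : ℝ) := by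
            exact_mod_cast h
          have hr : (1 + 1/((i.1:ℝ)+1)) * Fi.card = Fi.card + Fi.card/((i.1:ℝ)+1) := by
            field_simp
          linarith [hUcard]
        have hd2 : ((Fi \ gF).card : ℝ) ≤ (Fi.card : ℝ) / ((i.1:ℝ)+1) := by
          have h := Finset.card_sdiff_add_card Fi gF
          have h' : ((Fi \ gF).card : ℝ) + gF.card = ((Fi ∪ gF).card : ℝ) := by
            exact_mod_cast h
          rw [hgFcard] at h'
          have hr : (1 + 1/((i.1:ℝ)+1)) * Fi.card = Fi.card + Fi.card/((i.1:ℝ)+1) := by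
            field_simp
          linarith [hUcard]
        have hsum' : ∑ x ∈ Fi, (f' : X → ℝ) x = ∑ y ∈ gF, (f : X → ℝ) y := by
          rw [hgF, Finset.sum_image (fun x _ y _ h => MulAction.injective g h)]
          exact Finset.sum_congr rfl (fun x _ => hff' x)
        have hdiff : ∑ x ∈ Fi, (f' : X → ℝ) x - ∑ x ∈ Fi, (f : X → ℝ) x
            = ∑ y ∈ gF \ Fi, (f : X → ℝ) y - ∑ y ∈ Fi \ gF, (f : X → ℝ) y := by
          rw [hsum', Finset.sum_sdiff_sub_sum_sdiff]
        have habs : |∑ x ∈ Fi, (f' : X → ℝ) x - ∑ x ∈ Fi, (f : X → ℝ) x|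
            ≤ 2 * C₀ * Fi.card / ((i.1:ℝ)+1) := by
          rw [hdiff]
          have h1 : |∑ y ∈ gF \ Fi, (f : X → ℝ) y| ≤ C₀ * ((gF \ Fi).card : ℝ) := by
            calc |∑ y ∈ gF \ Fi, (f : X → ℝ) y| ≤ ∑ y ∈ gF \ Fi, |(f : X → ℝ) y| :=
                  Finset.abs_sum_le_sum_abs _ _
            _ ≤ ∑ _y ∈ gF \ Fi, C₀ := Finset.sum_le_sum (fun y _ => hC₀ y)
            _ = C₀ * ((gF \ Fi).card : ℝ) := by
                  rw [Finset.sum_const, nsmul_eq_mul, mul_comm]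
          have h2 : |∑ y ∈ Fi \ gF, (f : X → ℝ) y| ≤ C₀ * ((Fi \ gF).card : ℝ) := by
            calc |∑ y ∈ Fi \ gF, (f : X → ℝ) y| ≤ ∑ y ∈ Fi \ gF, |(f : X → ℝ) y| :=
                  Finset.abs_sum_le_sum_abs _ _
            _ ≤ ∑ _y ∈ Fi \ gF, C₀ := Finset.sum_le_sum (fun y _ => hC₀ y)
            _ = C₀ * ((Fi \ gF).card : ℝ) := by
                  rw [Finset.sum_const, nsmul_eq_mul, mul_comm]
          have h3 : C₀ * ((gF \ Fi).card : ℝ) ≤ C₀ * ((Fi.card : ℝ)/((i.1:ℝ)+1)) :=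
            mul_le_mul_of_nonneg_left hd1 hC0
          have h4 : C₀ * ((Fi \ gF).card : ℝ) ≤ C₀ * ((Fi.card : ℝ)/((i.1:ℝ)+1)) :=
            mul_le_mul_of_nonneg_left hd2 hC0
          have h5 := abs_sub (∑ y ∈ gF \ Fi, (f : X → ℝ) y) (∑ y ∈ Fi \ gF, (f : X → ℝ) y)
          have h6 : 2 * C₀ * (Fi.card:ℝ) / ((i.1:ℝ)+1)
              = C₀ * ((Fi.card : ℝ)/((i.1:ℝ)+1)) + C₀ * ((Fi.card : ℝ)/((i.1:ℝ)+1)) := by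
            ring
          calc |∑ y ∈ gF \ Fi, (f : X → ℝ) y - ∑ y ∈ Fi \ gF, (f : X → ℝ) y|
              ≤ |∑ y ∈ gF \ Fi, (f : X → ℝ) y| + |∑ y ∈ Fi \ gF, (f : X → ℝ) y| :=
                abs_sub _ _
          _ ≤ 2 * C₀ * Fi.card / ((i.1:ℝ)+1) := by rw [h6]; linarith
        have hmdiff : m i f' - m i f
            = (∑ x ∈ Fi, (f' : X → ℝ) x - ∑ x ∈ Fi, (f : X → ℝ) x) / (Fi.card : ℝ) := by
          show (∑ x ∈ Fi, (f' : X → ℝ) x)/(Fi.card:ℝ) - (∑ x ∈ Fi, (f : X → ℝ) x)/(Fi.card:ℝ) = _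
          exact (sub_div _ _ _).symm
        rw [hmdiff, abs_div, abs_of_pos hcard0, div_le_iff₀ hcard0]
        calc |∑ x ∈ Fi, (f' : X → ℝ) x - ∑ x ∈ Fi, (f : X → ℝ) x|
            ≤ 2 * C₀ * Fi.card / ((i.1:ℝ)+1) := habs
        _ = 2 * C₀ / ((i.1:ℝ)+1) * (Fi.card : ℝ) := by ring
      -- conclude tendsto of difference to 0 along atTop
      have htend0 : Tendsto (fun i => m i f' - m i f) atTop (𝓝 0) := by
        rw [Metric.tendsto_nhds]
        intro ε hε
        obtain ⟨N, hN⟩ := exists_nat_gt (2 * C₀ / ε)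
        rw [Filter.eventually_atTop]
        refine ⟨(N, {g}), fun i hi => ?_⟩
        obtain ⟨hi1, hi2⟩ := hi
        have hgi : g ∈ i.2 := hi2 (Finset.mem_singleton_self g)
        have h1 := hest i hgi
        rw [Real.dist_eq, sub_zero]
        have hiN : (N:ℝ) ≤ i.1 := by exact_mod_cast hi1
        have hN1 : (0:ℝ) < (N:ℝ) + 1 := by positivity
        have hi1' : (0:ℝ) < (i.1:ℝ) + 1 := by positivity
        have h2 : 2 * C₀ / ((i.1:ℝ) + 1) ≤ 2 * C₀ / ((N:ℝ) + 1) := by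
          gcongr
        have h3 : 2 * C₀ / ((N:ℝ) + 1) < ε := by
          rw [div_lt_iff₀ hN1]
          have h4 : 2 * C₀ < ε * N := by
            have := (div_lt_iff₀ hε).1 hN
            linarith
          nlinarith
        calc |m i f' - m i f| ≤ 2 * C₀ / ((i.1:ℝ) + 1) := h1
        _ ≤ 2 * C₀ / ((N:ℝ) + 1) := h2
        _ < ε := h3
      have htendU : Tendsto (fun i => m i f' - m i f) ↑U (𝓝 0) :=
        htend0.mono_left (Ultrafilter.of_le atTop)
      have := tendsto_nhds_unique ((hμ₀ f').sub (hμ₀ f)) htendU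
      have : μ₀ f' = μ₀ f := by linarith [this]
      exact this
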